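/- Let r be a positive integer and a, b integers with 0 < a, b < r, gcd(r,a) = gcd(r,b) = 1. Let e be such that a·e ≡ 1 (mod r), and let l = min{ i : 0 < i ≤ r and i ≡ a·i ≡ b·i (mod r) }. Define g(h) as the number of pairs (s,u) ∈ ℤ≥0² with l(s+u)/r < h, l(s+u)/r ∈ ℤ, and s + b·u ≡ 0 (mod r), plus the number of pairs (t,u) ∈ ℤ≥0² with l(t+u)/r < h, l(t+u)/r ∈ ℤ, and t + (e·b mod r)·u ≡ 0 (mod r). Then g(h)·2/h² tends to 2r/l² as h → ∞. -/

import Mathlib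

open Filter
open Finset

set_option maxHeartbeats 1000000

lemma sum_gauss (Y : ℕ) : (∑ n ∈ Finset.range Y, (n + 1)) * 2 = Y * (Y + 1) := by
  induction Y with
  | zero => simp
  | succ n ih => rw [Finset.sum_range_succ, add_mul, ih]; ring

lemma card_D (Y : ℕ) : Nat.card {p : ℕ × ℕ // p.1 + p.2 < Y} * 2 = Y * (Y + 1) := by
  have hset : {p : ℕ × ℕ | p.1 + p.2 < Y} =
      ↑((Finset.range Y ×ˢ Finset.range Y).filter fun p => p.1 + p.2 < Y) := by
    ext p
    simp only [Set.mem_setOf_eq, Finset.coe_filter, Finset.mem_product, Finset.mem_range,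
      Set.mem_setOf_eq]
    omega
  have h1 : Nat.card {p : ℕ × ℕ // p.1 + p.2 < Y} =
      ((Finset.range Y ×ˢ Finset.range Y).filter fun p => p.1 + p.2 < Y).card := by
    rw [← Set.ncard_coe_finset, ← hset]
    exact Nat.card_coe_set_eq _
  have h2 : ((Finset.range Y ×ˢ Finset.range Y).filter fun p => p.1 + p.2 < Y).card
      = ((Finset.range Y).sigma fun n => Finset.range (n + 1)).card := by
    apply Finset.card_nbij' (i := fun p => ⟨p.1 + p.2, p.1⟩) (j := fun q => (q.2, q.1 - q.2))
    · intro p hp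
      simp only [Finset.mem_coe, Finset.mem_filter, Finset.mem_product, Finset.mem_range] at hp
      simp only [Finset.mem_coe, Finset.mem_sigma, Finset.mem_range]
      omega
    · intro q hq
      simp only [Finset.mem_coe, Finset.mem_sigma, Finset.mem_range] at hq
      simp only [Finset.mem_coe, Finset.mem_filter, Finset.mem_product, Finset.mem_range]
      omega
    · intro p hp
      simp only [Finset.mem_coe, Finset.mem_filter, Finset.mem_product, Finset.mem_range] at hp
      simp only [Prod.ext_iff]
      constructor <;> simp <;> omega
    · intro q hq
      simp only [Finset.mem_coe, Finset.mem_sigma, Finset.mem_range] at hq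
      refine Sigma.ext ?_ (heq_of_eq ?_) <;> simp <;> omega
  rw [h1, h2, Finset.card_sigma]
  simp only [Finset.card_range]
  exact sum_gauss Y

lemma finite_tri {A B X : ℕ} (hA : 0 < A) (hB : 0 < B) :
    Finite {p : ℕ × ℕ // A * p.1 + B * p.2 < X} := by
  have : {p : ℕ × ℕ | A * p.1 + B * p.2 < X}.Finite := by
    apply Set.Finite.subset ((Set.finite_Iio X).prod (Set.finite_Iio X))
    intro p hp
    simp only [Set.mem_setOf_eq] at hp
    constructor
    · have : p.1 ≤ A * p.1 := Nat.le_mul_of_pos_left _ hA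
      simp only [Set.mem_Iio]; omega
    · have : p.2 ≤ B * p.2 := Nat.le_mul_of_pos_left _ hB
      simp only [Set.mem_Iio]; omega
  exact this.to_subtype

noncomputable def blocksEquiv {A B X : ℕ} (hA : 0 < A) (hB : 0 < B) :
    ((Fin A × Fin B) × {p : ℕ × ℕ // A * p.1 + B * p.2 < X}) ≃
      {p : ℕ × ℕ // A * (p.1 / A) + B * (p.2 / B) < X} :=
  { toFun := fun q => ⟨(A * q.2.1.1 + q.1.1.1, B * q.2.1.2 + q.1.2.1), by
      have h1 : (A * q.2.1.1 + q.1.1.1) / A = q.2.1.1 := by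
        rw [Nat.mul_add_div hA]
        simp [Nat.div_eq_of_lt q.1.1.2]
      have h2 : (B * q.2.1.2 + q.1.2.1) / B = q.2.1.2 := by
        rw [Nat.mul_add_div hB]
        simp [Nat.div_eq_of_lt q.1.2.2]
      simpa [h1, h2] using q.2.2⟩
    invFun := fun p => ⟨(⟨p.1.1 % A, Nat.mod_lt _ hA⟩, ⟨p.1.2 % B, Nat.mod_lt _ hB⟩),
      ⟨(p.1.1 / A, p.1.2 / B), p.2⟩⟩
    left_inv := fun q => by
      ext <;> simp [Nat.mul_add_div hA, Nat.mul_add_div hB,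
        Nat.div_eq_of_lt q.1.1.2, Nat.div_eq_of_lt q.1.2.2,
        Nat.mod_eq_of_lt q.1.1.2, Nat.mod_eq_of_lt q.1.2.2, Nat.mul_add_mod]
    right_inv := fun p => by
      apply Subtype.ext
      refine Prod.ext ?_ ?_
      · show A * (p.1.1 / A) + p.1.1 % A = p.1.1
        exact Nat.div_add_mod _ _
      · show B * (p.1.2 / B) + p.1.2 % B = p.1.2
        exact Nat.div_add_mod _ _ }

lemma finite_blocks {A B X : ℕ} (hA : 0 < A) (hB : 0 < B) :
    Finite {p : ℕ × ℕ // A * (p.1 / A) + B * (p.2 / B) < X} := by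
  haveI : Finite {p : ℕ × ℕ // A * p.1 + B * p.2 < X} := finite_tri hA hB
  exact Finite.of_equiv _ (blocksEquiv hA hB)

lemma card_blocks {A B X : ℕ} (hA : 0 < A) (hB : 0 < B) :
    Nat.card {p : ℕ × ℕ // A * (p.1 / A) + B * (p.2 / B) < X}
      = A * B * Nat.card {p : ℕ × ℕ // A * p.1 + B * p.2 < X} := by
  rw [← Nat.card_congr (blocksEquiv hA hB), Nat.card_prod, Nat.card_prod,
    Nat.card_eq_fintype_card, Nat.card_eq_fintype_card, Fintype.card_fin, Fintype.card_fin,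
    mul_assoc]

lemma tri_lower {A B X : ℕ} (hA : 0 < A) (hB : 0 < B) :
    X * (X + 1) ≤ 2 * (A * B * Nat.card {p : ℕ × ℕ // A * p.1 + B * p.2 < X}) := by
  rw [← card_blocks hA hB]
  have hle : Nat.card {p : ℕ × ℕ // p.1 + p.2 < X} ≤
      Nat.card {p : ℕ × ℕ // A * (p.1 / A) + B * (p.2 / B) < X} := by
    haveI := finite_blocks (X := X) hA hB
    apply Nat.card_le_card_of_injective
      (f := fun p => ⟨p.1, by
        have h1 : A * (p.1.1 / A) ≤ p.1.1 := Nat.mul_div_le _ _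
        have h2 : B * (p.1.2 / B) ≤ p.1.2 := Nat.mul_div_le _ _
        have := p.2
        omega⟩)
    intro p q hpq
    exact Subtype.ext (congrArg Subtype.val hpq : (_ : ℕ × ℕ) = _)
  calc X * (X + 1) = Nat.card {p : ℕ × ℕ // p.1 + p.2 < X} * 2 := (card_D X).symm
    _ ≤ 2 * Nat.card {p : ℕ × ℕ // A * (p.1 / A) + B * (p.2 / B) < X} := by omega

lemma tri_upper {A B X : ℕ} (hA : 0 < A) (hB : 0 < B) :
    2 * (A * B * Nat.card {p : ℕ × ℕ // A * p.1 + B * p.2 < X})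
      ≤ (X + A + B) * (X + A + B + 1) := by
  rw [← card_blocks hA hB]
  have hle : Nat.card {p : ℕ × ℕ // A * (p.1 / A) + B * (p.2 / B) < X} ≤
      Nat.card {p : ℕ × ℕ // p.1 + p.2 < X + A + B} := by
    haveI : Finite {p : ℕ × ℕ // p.1 + p.2 < X + A + B} := by
      simpa using finite_tri (A := 1) (B := 1) (X := X + A + B) one_pos one_pos
    apply Nat.card_le_card_of_injective
      (f := fun p => ⟨p.1, by
        have h1 : p.1.1 < p.1.1 / A * A + A := Nat.lt_div_mul_add hA
        have h2 : p.1.2 < p.1.2 / B * B + B := Nat.lt_div_mul_add hB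
        have e1 : p.1.1 / A * A = A * (p.1.1 / A) := Nat.mul_comm _ _
        have e2 : p.1.2 / B * B = B * (p.1.2 / B) := Nat.mul_comm _ _
        rw [e1] at h1; rw [e2] at h2
        have := p.2
        omega⟩)
    intro p q hpq
    exact Subtype.ext (congrArg Subtype.val hpq : (_ : ℕ × ℕ) = _)
  calc 2 * Nat.card {p : ℕ × ℕ // A * (p.1 / A) + B * (p.2 / B) < X}
      ≤ Nat.card {p : ℕ × ℕ // p.1 + p.2 < X + A + B} * 2 := by omega
    _ = (X + A + B) * (X + A + B + 1) := card_D _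

lemma tri_mono {A B : ℕ} (hA : 0 < A) (hB : 0 < B) {X Y : ℕ} (hXY : X ≤ Y) :
    Nat.card {p : ℕ × ℕ // A * p.1 + B * p.2 < X}
      ≤ Nat.card {p : ℕ × ℕ // A * p.1 + B * p.2 < Y} := by
  haveI := finite_tri (X := Y) hA hB
  apply Nat.card_le_card_of_injective (f := fun p => ⟨p.1, lt_of_lt_of_le p.2 hXY⟩)
  intro p q hpq
  exact Subtype.ext (congrArg Subtype.val hpq : (_ : ℕ × ℕ) = _)

lemma family_card {r l β : ℕ} (hr : 0 < r) (hβ : β * l ≡ l [MOD r]) (h : ℕ) :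
    Nat.card {p : ℕ × ℕ // l * (p.1 + p.2) < h * r ∧ r ∣ l * (p.1 + p.2) ∧
        (p.1 + β * p.2) % r = 0}
      = Nat.card {q : ℕ × ℕ //
          l * ((r - β * q.1 % r) % r + q.2 * r + q.1) < h * r} := by
  set c : ℕ → ℕ := fun u => (r - β * u % r) % r with hc
  have key1 : ∀ u, (c u + β * u) % r = 0 := by
    intro u
    have hm : β * u % r < r := Nat.mod_lt _ hr
    calc ((r - β * u % r) % r + β * u) % r = ((r - β * u % r) + β * u) % r :=
          Nat.mod_add_mod _ _ _
      _ = ((r - β * u % r) + β * u % r) % r := (Nat.add_mod_mod _ _ _).symm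
      _ = r % r := by rw [Nat.sub_add_cancel hm.le]
      _ = 0 := Nat.mod_self r
  have hclt : ∀ u, c u < r := fun u => Nat.mod_lt _ hr
  have key2 : ∀ s u, (s + β * u) % r = 0 → s = c u + s / r * r := by
    intro s u hs
    have hmod : s % r = c u % r := by
      have : s + β * u ≡ c u + β * u [MOD r] := by
        unfold Nat.ModEq; rw [hs, key1 u]
      exact Nat.ModEq.add_right_cancel' _ this
    have hcu : c u % r = c u := Nat.mod_eq_of_lt (hclt u)
    have hdm := Nat.div_add_mod s r
    rw [hmod, hcu, Nat.mul_comm] at hdm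
    omega
  have key1' : ∀ u j, ((c u + j * r) + β * u) % r = 0 := by
    intro u j
    have : (c u + j * r) + β * u = (c u + β * u) + j * r := by ring
    rw [this, Nat.add_mul_mod_self_right, key1 u]
  have key3 : ∀ u j, r ∣ l * ((c u + j * r) + u) := by
    intro u j
    have h1 : (c u + j * r) + β * u ≡ 0 [MOD r] := key1' u j
    have h2 : l * ((c u + j * r) + β * u) ≡ l * 0 [MOD r] := h1.mul_left l
    have h3 : l * u ≡ l * (β * u) [MOD r] := by
      have : β * l * u ≡ l * u [MOD r] := hβ.mul_right u
      have heq : β * l * u = l * (β * u) := by ring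
      rw [heq] at this
      exact this.symm
    have h4 : l * ((c u + j * r) + u) ≡ l * ((c u + j * r) + β * u) [MOD r] := by
      have := (Nat.ModEq.refl (l * (c u + j * r))).add h3
      simpa [mul_add] using this
    have h5 : l * ((c u + j * r) + u) ≡ 0 [MOD r] := h4.trans (by simpa using h2)
    exact (Nat.modEq_zero_iff_dvd.mp h5)
  apply Nat.card_congr
  refine
  { toFun := fun p => ⟨(p.1.2, p.1.1 / r), ?_⟩
    invFun := fun q => ⟨(c q.1.1 + q.1.2 * r, q.1.1), ?_, ?_, ?_⟩
    left_inv := ?_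
    right_inv := ?_ }
  · -- l * (c u + j*r + u) < h*r for u = p.1.2, j = p.1.1 / r
    obtain ⟨⟨s, u⟩, h1, h2, h3⟩ := p
    have hs := key2 s u h3
    simp only at *
    have : c u + s / r * r = s := by omega
    rw [this]
    exact h1
  · -- l*(s+u) < h*r
    obtain ⟨⟨u, j⟩, hq⟩ := q
    simpa [add_comm, add_assoc, add_left_comm] using hq
  · obtain ⟨⟨u, j⟩, hq⟩ := q
    simpa using key3 u j
  · obtain ⟨⟨u, j⟩, hq⟩ := q
    simpa using key1' u j
  · rintro ⟨⟨s, u⟩, h1, h2, h3⟩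
    apply Subtype.ext
    have hs := key2 s u h3
    simp only
    exact Prod.ext (by omega) rfl
  · rintro ⟨⟨u, j⟩, hq⟩
    apply Subtype.ext
    simp only
    refine Prod.ext rfl ?_
    show (c u + j * r) / r = j
    rw [Nat.add_mul_div_right _ _ hr, Nat.div_eq_of_lt (hclt u)]
    omega

lemma family_sandwich {r l β : ℕ} (hr : 0 < r) (hl : 0 < l) (hβ : β * l ≡ l [MOD r]) (h : ℕ) :
    (h * r - l * (r - 1)) * ((h * r - l * (r - 1)) + 1)
        ≤ 2 * (l * (l * r) * Nat.card {p : ℕ × ℕ // l * (p.1 + p.2) < h * r ∧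
            r ∣ l * (p.1 + p.2) ∧ (p.1 + β * p.2) % r = 0})
    ∧ 2 * (l * (l * r) * Nat.card {p : ℕ × ℕ // l * (p.1 + p.2) < h * r ∧
            r ∣ l * (p.1 + p.2) ∧ (p.1 + β * p.2) % r = 0})
        ≤ (h * r + l + l * r) * ((h * r + l + l * r) + 1) := by
  have hB : 0 < l * r := Nat.mul_pos hl hr
  rw [family_card hr hβ h]
  set T := {q : ℕ × ℕ // l * ((r - β * q.1 % r) % r + q.2 * r + q.1) < h * r} with hT
  have pfup : ∀ q : T, l * q.1.1 + (l * r) * q.1.2 < h * r := by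
    rintro ⟨⟨u, j⟩, hq⟩
    have hexp : l * ((r - β * u % r) % r + j * r + u)
        = l * ((r - β * u % r) % r) + (l * u + (l * r) * j) := by ring
    rw [hexp] at hq
    simp only
    omega
  haveI finT : Finite T := by
    haveI := finite_tri (A := l) (B := l * r) (X := h * r) hl hB
    exact Finite.of_injective (fun q : T => (⟨q.1, pfup q⟩ :
      {p : ℕ × ℕ // l * p.1 + (l * r) * p.2 < h * r}))
      (fun q q' hqq => Subtype.ext (congrArg Subtype.val hqq : (_ : ℕ × ℕ) = _))
  have up : Nat.card T ≤ Nat.card {p : ℕ × ℕ // l * p.1 + (l * r) * p.2 < h * r} := by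
    haveI := finite_tri (A := l) (B := l * r) (X := h * r) hl hB
    exact Nat.card_le_card_of_injective (fun q : T => (⟨q.1, pfup q⟩ :
      {p : ℕ × ℕ // l * p.1 + (l * r) * p.2 < h * r}))
      (fun q q' hqq => Subtype.ext (congrArg Subtype.val hqq : (_ : ℕ × ℕ) = _))
  have low : Nat.card {p : ℕ × ℕ // l * p.1 + (l * r) * p.2 < h * r - l * (r - 1)}
      ≤ Nat.card T := by
    have pflow : ∀ p : {p : ℕ × ℕ // l * p.1 + (l * r) * p.2 < h * r - l * (r - 1)},
        l * ((r - β * p.1.1 % r) % r + p.1.2 * r + p.1.1) < h * r := by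
      rintro ⟨⟨u, j⟩, hp⟩
      have hclt : (r - β * u % r) % r < r := Nat.mod_lt _ hr
      have hcle : (r - β * u % r) % r ≤ r - 1 := by omega
      have hlc : l * ((r - β * u % r) % r) ≤ l * (r - 1) := Nat.mul_le_mul_left l hcle
      have hexp : l * ((r - β * u % r) % r + j * r + u)
          = l * ((r - β * u % r) % r) + (l * u + (l * r) * j) := by ring
      rw [hexp]
      simp only at hp
      omega
    exact Nat.card_le_card_of_injective
      (fun p => (⟨p.1, pflow p⟩ : T))
      (fun q q' hqq => Subtype.ext (congrArg Subtype.val hqq : (_ : ℕ × ℕ) = _))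
  constructor
  · calc (h * r - l * (r - 1)) * ((h * r - l * (r - 1)) + 1)
        ≤ 2 * (l * (l * r) * Nat.card {p : ℕ × ℕ //
            l * p.1 + (l * r) * p.2 < h * r - l * (r - 1)}) := tri_lower hl hB
      _ ≤ 2 * (l * (l * r) * Nat.card T) := by
          exact Nat.mul_le_mul_left 2 (Nat.mul_le_mul_left _ low)
  · calc 2 * (l * (l * r) * Nat.card T)
        ≤ 2 * (l * (l * r) * Nat.card {p : ℕ × ℕ // l * p.1 + (l * r) * p.2 < h * r}) :=
          Nat.mul_le_mul_left 2 (Nat.mul_le_mul_left _ up)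
      _ ≤ (h * r + l + l * r) * ((h * r + l + l * r) + 1) := tri_upper hl hB

lemma squeeze_main {r l : ℕ} (hr : 0 < r) (hl : 0 < l) (N₁ N₂ : ℕ → ℕ)
    (hb1 : ∀ h : ℕ, (h * r - l * (r - 1)) * ((h * r - l * (r - 1)) + 1) ≤ 2 * (l * (l * r) * N₁ h))
    (hb2 : ∀ h : ℕ, 2 * (l * (l * r) * N₁ h) ≤ (h * r + l + l * r) * ((h * r + l + l * r) + 1))
    (hb3 : ∀ h : ℕ, (h * r - l * (r - 1)) * ((h * r - l * (r - 1)) + 1) ≤ 2 * (l * (l * r) * N₂ h))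
    (hb4 : ∀ h : ℕ, 2 * (l * (l * r) * N₂ h) ≤ (h * r + l + l * r) * ((h * r + l + l * r) + 1)) :
    Tendsto (fun h : ℕ => (((N₁ h + N₂ h) : ℝ) * 2) / (h : ℝ) ^ 2)
      atTop (nhds (2 * (r : ℝ) / (l : ℝ) ^ 2)) := by
  have hl' : (0:ℝ) < (l:ℝ) := by exact_mod_cast hl
  have hr' : (0:ℝ) < (r:ℝ) := by exact_mod_cast hr
  have hK : (0:ℝ) < (l:ℝ) * ((l:ℝ) * (r:ℝ)) := by positivity
  set G : ℕ → ℝ := fun h =>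
    (((h * r - l * (r - 1) : ℕ) : ℝ) * (((h * r - l * (r - 1) : ℕ) : ℝ) + 1)
      / ((l:ℝ) * ((l:ℝ) * r)) * 2) / (h : ℝ) ^ 2 with hG
  set U : ℕ → ℝ := fun h =>
    (((h * r + l + l * r : ℕ) : ℝ) * (((h * r + l + l * r : ℕ) : ℝ) + 1)
      / ((l:ℝ) * ((l:ℝ) * r)) * 2) / (h : ℝ) ^ 2 with hU
  have tG : Tendsto G atTop (nhds (2 * (r : ℝ) / (l : ℝ) ^ 2)) := by
    have t1 : Tendsto (fun h : ℕ => ((l * (r - 1) : ℕ) : ℝ) / h) atTop (nhds 0) :=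
      tendsto_const_div_atTop_nhds_zero_nat _
    have t2 : Tendsto (fun h : ℕ => (1 : ℝ) / h) atTop (nhds 0) :=
      tendsto_one_div_atTop_nhds_zero_nat
    have tmodel : Tendsto (fun h : ℕ =>
        ((r : ℝ) - ((l * (r - 1) : ℕ) : ℝ)/h) * (((r : ℝ) - ((l * (r - 1) : ℕ) : ℝ)/h) + 1/h)
          / ((l:ℝ) * ((l:ℝ) * r)) * 2)
        atTop (nhds (((r : ℝ) - 0) * (((r : ℝ) - 0) + 0) / ((l:ℝ) * ((l:ℝ) * r)) * 2)) :=
      (((tendsto_const_nhds.sub t1).mul ((tendsto_const_nhds.sub t1).add t2)).div_const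
        _).mul_const _
    have hval : ((r : ℝ) - 0) * (((r : ℝ) - 0) + 0) / ((l:ℝ) * ((l:ℝ) * r)) * 2
        = 2 * (r : ℝ) / (l : ℝ) ^ 2 := by
      field_simp; ring
    rw [hval] at tmodel
    apply tmodel.congr'
    filter_upwards [eventually_ge_atTop (l * (r - 1) + 1)] with h hh
    have hh1 : 1 ≤ h := by omega
    have hsub : l * (r - 1) ≤ h * r := le_trans (by omega) (Nat.le_mul_of_pos_right h hr)
    have hcast : ((h * r - l * (r - 1) : ℕ) : ℝ) = (h:ℝ) * r - ((l * (r - 1) : ℕ) : ℝ) := by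
      rw [Nat.cast_sub hsub]; push_cast; ring
    have hne : (h : ℝ) ≠ 0 := by positivity
    rw [hG]; simp only
    rw [hcast]
    field_simp
  have tU : Tendsto U atTop (nhds (2 * (r : ℝ) / (l : ℝ) ^ 2)) := by
    have t1 : Tendsto (fun h : ℕ => ((l + l * r : ℕ) : ℝ) / h) atTop (nhds 0) :=
      tendsto_const_div_atTop_nhds_zero_nat _
    have t2 : Tendsto (fun h : ℕ => (1 : ℝ) / h) atTop (nhds 0) :=
      tendsto_one_div_atTop_nhds_zero_nat
    have tmodel : Tendsto (fun h : ℕ =>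
        ((r : ℝ) + ((l + l * r : ℕ) : ℝ)/h) * (((r : ℝ) + ((l + l * r : ℕ) : ℝ)/h) + 1/h)
          / ((l:ℝ) * ((l:ℝ) * r)) * 2)
        atTop (nhds (((r : ℝ) + 0) * (((r : ℝ) + 0) + 0) / ((l:ℝ) * ((l:ℝ) * r)) * 2)) :=
      (((tendsto_const_nhds.add t1).mul ((tendsto_const_nhds.add t1).add t2)).div_const
        _).mul_const _
    have hval : ((r : ℝ) + 0) * (((r : ℝ) + 0) + 0) / ((l:ℝ) * ((l:ℝ) * r)) * 2
        = 2 * (r : ℝ) / (l : ℝ) ^ 2 := by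
      field_simp; ring
    rw [hval] at tmodel
    apply tmodel.congr'
    filter_upwards [eventually_ge_atTop 1] with h hh1
    have hne : (h : ℝ) ≠ 0 := by
      have : (0:ℝ) < h := by exact_mod_cast hh1
      positivity
    rw [hU]; simp only
    have hcast : ((h * r + l + l * r : ℕ) : ℝ) = (h:ℝ) * r + ((l + l * r : ℕ) : ℝ) := by
      push_cast; ring
    rw [hcast]
    field_simp
  apply tendsto_of_tendsto_of_tendsto_of_le_of_le' tG tU
  · filter_upwards [eventually_ge_atTop 1] with h hh1
    have hh : (0:ℝ) < (h:ℝ) ^ 2 := by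
      have : (0:ℝ) < h := by exact_mod_cast hh1
      positivity
    rw [hG]; simp only
    have c1 : ((h * r - l * (r - 1) : ℕ) : ℝ) * (((h * r - l * (r - 1) : ℕ) : ℝ) + 1)
        ≤ 2 * ((l:ℝ) * ((l:ℝ) * r) * (N₁ h : ℝ)) := by exact_mod_cast hb1 h
    have c2 : ((h * r - l * (r - 1) : ℕ) : ℝ) * (((h * r - l * (r - 1) : ℕ) : ℝ) + 1)
        ≤ 2 * ((l:ℝ) * ((l:ℝ) * r) * (N₂ h : ℝ)) := by exact_mod_cast hb3 h
    have key : ((h * r - l * (r - 1) : ℕ) : ℝ) * (((h * r - l * (r - 1) : ℕ) : ℝ) + 1)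
          / ((l:ℝ) * ((l:ℝ) * r)) * 2
        ≤ ((N₁ h : ℝ) + (N₂ h : ℝ)) * 2 := by
      rw [div_mul_eq_mul_div, div_le_iff₀ hK]
      nlinarith [c1, c2]
    exact div_le_div_of_nonneg_right key hh.le |>.trans_eq rfl
  · filter_upwards [eventually_ge_atTop 1] with h hh1
    have hh : (0:ℝ) < (h:ℝ) ^ 2 := by
      have : (0:ℝ) < h := by exact_mod_cast hh1
      positivity
    rw [hU]; simp only
    have c1 : 2 * ((l:ℝ) * ((l:ℝ) * r) * (N₁ h : ℝ))
        ≤ ((h * r + l + l * r : ℕ) : ℝ) * (((h * r + l + l * r : ℕ) : ℝ) + 1) := by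
      exact_mod_cast hb2 h
    have c2 : 2 * ((l:ℝ) * ((l:ℝ) * r) * (N₂ h : ℝ))
        ≤ ((h * r + l + l * r : ℕ) : ℝ) * (((h * r + l + l * r : ℕ) : ℝ) + 1) := by
      exact_mod_cast hb4 h
    have key : ((N₁ h : ℝ) + (N₂ h : ℝ)) * 2
        ≤ ((h * r + l + l * r : ℕ) : ℝ) * (((h * r + l + l * r : ℕ) : ℝ) + 1)
          / ((l:ℝ) * ((l:ℝ) * r)) * 2 := by
      rw [div_mul_eq_mul_div, le_div_iff₀ hK]
      nlinarith [c1, c2]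
    exact div_le_div_of_nonneg_right key hh.le |>.trans_eq rfl


/-- Weighted multiplicity of the A-type surface S₂ = {xy + zⁿ = 0} ⊂ ℂ³/ℤ_r(1,a,b):
    counting monomials x^s z^u and y^t z^u with the integrality and congruence
    conditions, g(h)·2/h² → 2r/l². -/
theorem stmt4 (r a b e : ℕ) (hr : 0 < r) (ha : 0 < a ∧ a < r) (hb : 0 < b ∧ b < r)
    (hca : Nat.Coprime r a) (hcb : Nat.Coprime r b) (he : a * e % r = 1 % r) :
    ∀ l : ℕ, l = sInf {i : ℕ | 0 < i ∧ i ≤ r ∧ a * i ≡ i [MOD r] ∧ b * i ≡ i [MOD r]} →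
    Tendsto (fun h : ℕ =>
      (((Nat.card {p : ℕ × ℕ // l * (p.1 + p.2) < h * r ∧ r ∣ l * (p.1 + p.2) ∧
            (p.1 + b * p.2) % r = 0}
        + Nat.card {p : ℕ × ℕ // l * (p.1 + p.2) < h * r ∧ r ∣ l * (p.1 + p.2) ∧
            (p.1 + (e * b % r) * p.2) % r = 0}) : ℝ) * 2) / (h : ℝ) ^ 2)
      atTop (nhds (2 * (r : ℝ) / (l : ℝ) ^ 2)) := by
  intro l hl
  have hrmem : r ∈ {i : ℕ | 0 < i ∧ i ≤ r ∧ a * i ≡ i [MOD r] ∧ b * i ≡ i [MOD r]} := by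
    refine ⟨hr, le_refl r, ?_, ?_⟩ <;>
      · show _ % r = _ % r
        simp [Nat.mul_mod_left, Nat.mod_self]
  have hlmem : l ∈ {i : ℕ | 0 < i ∧ i ≤ r ∧ a * i ≡ i [MOD r] ∧ b * i ≡ i [MOD r]} := by
    rw [hl]
    exact Nat.sInf_mem ⟨r, hrmem⟩
  obtain ⟨hl0, hlr, hal, hbl⟩ := hlmem
  -- β₂ * l ≡ l
  have hel : e * l ≡ l [MOD r] := by
    have hea : a * e ≡ 1 [MOD r] := he
    have h1 : a * e * l ≡ 1 * l [MOD r] := hea.mul_right l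
    have h2 : e * (a * l) ≡ e * l [MOD r] := hal.mul_left e
    have h3 : e * (a * l) = a * e * l := by ring
    rw [h3] at h2
    have := h2.symm.trans h1
    simpa using this
  have hb2 : (e * b % r) * l ≡ l [MOD r] := by
    have h0 : (e * b % r) * l ≡ (e * b) * l [MOD r] := (Nat.mod_modEq (e * b) r).mul_right l
    have h1 : b * (e * l) ≡ b * l [MOD r] := hel.mul_left b
    have h2 : (e * b) * l = b * (e * l) := by ring
    rw [h2] at h0
    exact h0.trans (h1.trans hbl)
  have s1 := fun h => family_sandwich (β := b) hr hl0 hbl h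
  have s2 := fun h => family_sandwich (β := e * b % r) hr hl0 hb2 h
  exact squeeze_main hr hl0 _ _ (fun h => (s1 h).1) (fun h => (s1 h).2)
    (fun h => (s2 h).1) (fun h => (s2 h).2)
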